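/- Let K be a variety of τ-algebras all of whose members are finite-dimensional, and let A be a finite-dimensional τ-algebra such that for every s ∈ A^ω with {s_i : i ∈ ω} finite, the subalgebra A_s̄ of A generated by {s_i : i ∈ ω} belongs to K. Then A belongs to K. -/

import Mathlib

/-! ### τ-algebras (homogeneous type: every symbol of arity ω) -/

/-- `α` is a homomorphism of τ-algebras from `(A, FA)` to `(B, FB)`. -/
def IsAlgHom {τ A B : Type} (FA : τ → (ℕ → A) → A) (FB : τ → (ℕ → B) → B)
    (α : A → B) : Prop :=
  ∀ f s, α (FA f s) = FB f (fun i => α (s i))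

/-! ### Infinitary clone τ-algebras -/

/-- The data of an infinitary clone τ-algebra on carrier `C`. -/
structure CloneData (τ C : Type) where
  e : ℕ → C
  F : τ → C
  q : C → (ℕ → C) → C

/-- Axioms (N1)–(N3) of infinitary clone τ-algebras. -/
def IsCloneAlg {τ C : Type} (d : CloneData τ C) : Prop :=
  (∀ (i : ℕ) (s : ℕ → C), d.q (d.e i) s = s i) ∧
  (∀ x : C, d.q x d.e = x) ∧
  (∀ (x : C) (y z : ℕ → C), d.q (d.q x y) z = d.q x (fun i => d.q (y i) z))

/-- Homomorphisms of infinitary clone τ-algebras. -/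
def IsCloneHom {τ C D : Type} (dC : CloneData τ C) (dD : CloneData τ D)
    (α : C → D) : Prop :=
  (∀ i, α (dC.e i) = dD.e i) ∧
  (∀ f, α (dC.F f) = dD.F f) ∧
  (∀ x s, α (dC.q x s) = dD.q (α x) (fun i => α (s i)))

/-- Subuniverses of an infinitary clone τ-algebra. -/
def IsCloneSubuniv {τ C : Type} (d : CloneData τ C) (S : Set C) : Prop :=
  (∀ i, d.e i ∈ S) ∧ (∀ f, d.F f ∈ S) ∧
  (∀ (a : C) (s : ℕ → C), a ∈ S → (∀ i, s i ∈ S) → d.q a s ∈ S)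

/-- The full functional infinitary clone τ-algebra `O^(ω)_A` on the value domain `(A, FA)`. -/
def fullCloneData {τ : Type} (A : Type) (FA : τ → (ℕ → A) → A) :
    CloneData τ ((ℕ → A) → A) where
  e i := fun s => s i
  F f := FA f
  q g h := fun s => g (fun i => h i s)

/-- The τ-algebra `C↓` associated with an infinitary clone τ-algebra. -/
def downOp {τ C : Type} (d : CloneData τ C) : τ → (ℕ → C) → C :=
  fun f s => d.q (d.F f) s

/-- The clone structure induced on a subuniverse. -/
def subCloneData {τ C : Type} (d : CloneData τ C) {S : Set C}
    (h : IsCloneSubuniv d S) : CloneData τ S where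
  e i := ⟨d.e i, h.1 i⟩
  F f := ⟨d.F f, h.2.1 f⟩
  q a s := ⟨d.q a.1 (fun i => (s i).1), h.2.2 _ _ a.2 (fun i => (s i).2)⟩

/-! ### Terms -/

/-- τ-terms over the variables `e 0, e 1, …`. -/
inductive Term (τ : Type) : Type
  | e : ℕ → Term τ
  | app : τ → (ℕ → Term τ) → Term τ

/-- Term operation of a τ-term on the τ-algebra `(A, FA)`. -/
def Term.eval {τ A : Type} (FA : τ → (ℕ → A) → A) : Term τ → (ℕ → A) → A
  | .e i, s => s i
  | .app f t, s => FA f (fun i => (t i).eval FA s)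

/-- Simultaneous substitution of terms for variables. -/
def Term.subst {τ : Type} : Term τ → (ℕ → Term τ) → Term τ
  | .e i, u => u i
  | .app f t, u => .app f (fun i => (t i).subst u)

theorem Term.eval_subst {τ A : Type} (FA : τ → (ℕ → A) → A) :
    ∀ (t : Term τ) (u : ℕ → Term τ) (s : ℕ → A),
      (t.subst u).eval FA s = t.eval FA (fun i => (u i).eval FA s)
  | .e _, _, _ => rfl
  | .app f t, u, s => by
      simp only [Term.subst, Term.eval]
      congr 1
      funext i
      exact Term.eval_subst FA (t i) u s

/-- The initial infinitary clone τ-algebra `N_τ̄` on the set of τ-terms. -/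
def initData (τ : Type) : CloneData τ (Term τ) where
  e := Term.e
  F f := Term.app f Term.e
  q := Term.subst

/-- The term infinitary clone τ-algebra `A↑` (as a clone structure on the set
of term operations of `A`). -/
def upData {τ A : Type} (FA : τ → (ℕ → A) → A) :
    CloneData τ {g : (ℕ → A) → A // ∃ t : Term τ, g = Term.eval FA t} where
  e i := ⟨fun s => s i, ⟨Term.e i, rfl⟩⟩
  F f := ⟨FA f, ⟨Term.app f Term.e, by funext s; rfl⟩⟩
  q g h := ⟨fun s => g.1 (fun i => (h i).1 s), by
    obtain ⟨t, ht⟩ := g.2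
    refine ⟨t.subst (fun i => (h i).2.choose), ?_⟩
    funext s
    rw [Term.eval_subst, ← ht]
    exact congrArg _ (funext fun i => by rw [← (h i).2.choose_spec])⟩

/-! ### Bundled algebras, varieties -/

/-- A bundled τ-algebra. -/
structure Alg (τ : Type) : Type 1 where
  carrier : Type
  op : τ → (ℕ → carrier) → carrier

/-- Subuniverses of a τ-algebra. -/
def IsSubuniv {τ : Type} (A : Alg τ) (S : Set A.carrier) : Prop :=
  ∀ f s, (∀ i, s i ∈ S) → A.op f s ∈ S

/-- The subalgebra on a subuniverse. -/
def subAlg {τ : Type} (A : Alg τ) (S : Set A.carrier) (h : IsSubuniv A S) : Alg τ :=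
  ⟨S, fun f s => ⟨A.op f (fun i => (s i).1), h f _ (fun i => (s i).2)⟩⟩

/-- Product of τ-algebras, with componentwise operations. -/
def prodAlg {τ I : Type} (A : I → Alg τ) : Alg τ :=
  ⟨∀ i, (A i).carrier, fun f s i => (A i).op f (fun n => s n i)⟩

/-- Power of a τ-algebra. -/
def powAlg {τ : Type} (A : Alg τ) (I : Type) : Alg τ := prodAlg (fun _ : I => A)

/-- A variety: a class of τ-algebras closed under homomorphic images,
subalgebras (together with isomorphic copies), and arbitrary products. -/
def IsVariety {τ : Type} (K : Alg τ → Prop) : Prop :=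
  (∀ A B : Alg τ, K A →
    (∃ α : A.carrier → B.carrier, Function.Surjective α ∧ IsAlgHom A.op B.op α) → K B) ∧
  (∀ A B : Alg τ, K A →
    (∃ α : B.carrier → A.carrier, Function.Injective α ∧ IsAlgHom B.op A.op α) → K B) ∧
  (∀ (I : Type) (A : I → Alg τ), (∀ i, K (A i)) → K (prodAlg A))

/-- The subuniverse generated by a subset. -/
def gen {τ : Type} (A : Alg τ) (X : Set A.carrier) : Set A.carrier :=
  ⋂₀ {S | IsSubuniv A S ∧ X ⊆ S}

theorem gen_subuniv {τ : Type} (A : Alg τ) (X : Set A.carrier) :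
    IsSubuniv A (gen A X) := by
  intro f s hs
  rw [gen, Set.mem_sInter]
  intro S hS
  exact hS.1 f s (fun i => Set.mem_sInter.1 (hs i) S hS)

/-- The subalgebra generated by a subset. -/
def genSubalg {τ : Type} (A : Alg τ) (X : Set A.carrier) : Alg τ :=
  subAlg A (gen A X) (gen_subuniv A X)

/-! ### Bundled infinitary clone algebras -/

/-- A bundled infinitary clone τ-algebra. -/
structure CAlg (τ : Type) : Type 1 where
  carrier : Type
  data : CloneData τ carrier
  isClone : IsCloneAlg data

/-- Componentwise product of clone data. -/
def prodCloneData {τ I : Type} {C : I → Type} (d : ∀ i, CloneData τ (C i)) :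
    CloneData τ (∀ i, C i) where
  e n := fun i => (d i).e n
  F f := fun i => (d i).F f
  q a s := fun i => (d i).q (a i) (fun n => s n i)

theorem prodCloneData_isClone {τ I : Type} {C : I → Type} (d : ∀ i, CloneData τ (C i))
    (h : ∀ i, IsCloneAlg (d i)) : IsCloneAlg (prodCloneData d) := by
  refine ⟨?_, ?_, ?_⟩
  · intro n s; funext i; exact (h i).1 n (fun m => s m i)
  · intro x; funext i; exact (h i).2.1 (x i)
  · intro x y z; funext i; exact (h i).2.2 (x i) (fun n => y n i) (fun n => z n i)

/-- Product of infinitary clone τ-algebras. -/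
def prodCAlg {τ I : Type} (Cs : I → CAlg τ) : CAlg τ :=
  ⟨∀ i, (Cs i).carrier, prodCloneData (fun i => (Cs i).data),
    prodCloneData_isClone _ (fun i => (Cs i).isClone)⟩

/-- A variety of infinitary clone τ-algebras. -/
def IsCloneVariety {τ : Type} (H : CAlg τ → Prop) : Prop :=
  (∀ C D : CAlg τ, H C →
    (∃ α : C.carrier → D.carrier, Function.Surjective α ∧ IsCloneHom C.data D.data α) → H D) ∧
  (∀ C D : CAlg τ, H C →
    (∃ α : D.carrier → C.carrier, Function.Injective α ∧ IsCloneHom D.data C.data α) → H D) ∧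
  (∀ (I : Type) (Cs : I → CAlg τ), (∀ i, H (Cs i)) → H (prodCAlg Cs))

/-! ### The operators △ and ▽ -/

/-- `K△`: clone algebras isomorphic to a subalgebra of `O^(ω)_A` for some `A ∈ K`. -/
def Tri {τ : Type} (K : Alg τ → Prop) (D : CAlg τ) : Prop :=
  ∃ A : Alg τ, K A ∧ ∃ α : D.carrier → ((ℕ → A.carrier) → A.carrier),
    Function.Injective α ∧ IsCloneHom D.data (fullCloneData A.carrier A.op) α

/-- `H▽`: τ-algebras isomorphic to some `A` having a functional infinitary clone
τ-algebra on value domain `A` belonging to `H`. -/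
def Nabla {τ : Type} (H : CAlg τ → Prop) (B : Alg τ) : Prop :=
  ∃ A : Alg τ,
    (∃ α : B.carrier → A.carrier, Function.Bijective α ∧ IsAlgHom B.op A.op α) ∧
    ∃ D : CAlg τ, H D ∧ ∃ β : D.carrier → ((ℕ → A.carrier) → A.carrier),
      Function.Injective β ∧ IsCloneHom D.data (fullCloneData A.carrier A.op) β

/-! ### Equational theories -/

/-- The equational theory of a class of τ-algebras. -/
def ThK {τ : Type} (K : Alg τ → Prop) : Set (Term τ × Term τ) :=
  {p | ∀ A : Alg τ, K A → Term.eval A.op p.1 = Term.eval A.op p.2}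

/-- The class of models of a set of identities. -/
def ModClass {τ : Type} (Sg : Set (Term τ × Term τ)) : Alg τ → Prop :=
  fun A => ∀ p ∈ Sg, Term.eval A.op p.1 = Term.eval A.op p.2

/-! ### HSP -/

/-- `B` is a homomorphic image of a subalgebra of a power of `A`. -/
def InHSP {τ : Type} (A B : Alg τ) : Prop :=
  ∃ (I : Type) (S : Set (powAlg A I).carrier) (h : IsSubuniv (powAlg A I) S)
    (α : (subAlg (powAlg A I) S h).carrier → B.carrier),
    Function.Surjective α ∧ IsAlgHom (subAlg (powAlg A I) S h).op B.op α

/-- `B` is a homomorphic image of a subalgebra of a finite power of `A`. -/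
def InHSPFin {τ : Type} (A B : Alg τ) : Prop :=
  ∃ (n : ℕ) (S : Set (powAlg A (Fin n)).carrier) (h : IsSubuniv (powAlg A (Fin n)) S)
    (α : (subAlg (powAlg A (Fin n)) S h).carrier → B.carrier),
    Function.Surjective α ∧ IsAlgHom (subAlg (powAlg A (Fin n)) S h).op B.op α

/-! ### Finite dimensionality -/

/-- An ω-ary operation has finite dimension. -/
def FinDimOp {A : Type} (g : (ℕ → A) → A) : Prop :=
  ∃ n : ℕ, ∀ s u : ℕ → A, (∀ i < n, s i = u i) → g s = g u

/-- A τ-algebra is finite-dimensional if all its term operations have finite dimension. -/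
def FinDimAlg {τ : Type} (A : Alg τ) : Prop :=
  ∀ t : Term τ, FinDimOp (Term.eval A.op t)

theorem subset_gen {τ : Type} (A : Alg τ) (X : Set A.carrier) : X ⊆ gen A X :=
  fun _ ha => Set.mem_sInter.2 fun _ hS => hS.2 ha

theorem gen_subset {τ : Type} (A : Alg τ) {X S : Set A.carrier}
    (h1 : IsSubuniv A S) (h2 : X ⊆ S) : gen A X ⊆ S :=
  fun _ ha => Set.mem_sInter.1 ha S ⟨h1, h2⟩

theorem gen_mono {τ : Type} (A : Alg τ) {X Y : Set A.carrier} (h : X ⊆ Y) :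
    gen A X ⊆ gen A Y :=
  gen_subset A (gen_subuniv A Y) (h.trans (subset_gen A Y))

/-- Underlying element of a member of a generated subalgebra. -/
def valOf {τ : Type} (A : Alg τ) (X : Set A.carrier)
    (y : (genSubalg A X).carrier) : A.carrier := y.1

theorem valOf_mem {τ : Type} (A : Alg τ) (X : Set A.carrier)
    (y : (genSubalg A X).carrier) : valOf A X y ∈ gen A X := y.2

/-! ### Statement 12 -/

theorem stmt12 (τ : Type) (K : Alg τ → Prop) (hK : IsVariety K)
    (hfd : ∀ B : Alg τ, K B → FinDimAlg B)
    (A : Alg τ) (hA : FinDimAlg A)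
    (h : ∀ s : ℕ → A.carrier, (Set.range s).Finite → K (genSubalg A (Set.range s))) :
    K A := by
  classical
  by_cases hne : Nonempty A.carrier
  case neg =>
    have hP : K (prodAlg (fun i : Empty => A)) := hK.2.2 Empty _ (fun i => i.elim)
    refine hK.2.1 _ A hP ⟨fun a => fun i => i.elim, ?_, ?_⟩
    · intro a b _; exact absurd (⟨a⟩ : Nonempty A.carrier) hne
    · intro f s; exact absurd (⟨s 0⟩ : Nonempty A.carrier) hne
  case pos =>
  set I := {u : ℕ → A.carrier // (Set.range u).Finite} with hI
  set Ag : I → Alg τ := fun s => genSubalg A (Set.range s.1) with hAg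
  set P : Alg τ := prodAlg Ag with hP
  have hKP : K P := hK.2.2 I Ag (fun s => h s.1 s.2)
  set cov : I → I → Prop :=
    fun s t => gen A (Set.range s.1) ⊆ gen A (Set.range t.1) with hcov
  have dir : ∀ (n : ℕ) (v : ℕ → I), ∃ w : I, ∀ i < n + 1, cov (v i) w := by
    intro n v
    refine ⟨⟨fun k => (v (k % (n+1))).1 (k / (n+1)), ?_⟩, ?_⟩
    · refine Set.Finite.subset (Set.finite_iUnion (fun i : Fin (n+1) => (v i.1).2)) ?_
      rintro _ ⟨k, rfl⟩
      exact Set.mem_iUnion.2 ⟨⟨k % (n+1), Nat.mod_lt _ (Nat.succ_pos n)⟩, ⟨k / (n+1), rfl⟩⟩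
    · intro i hi
      refine gen_mono A ?_
      rintro _ ⟨m, rfl⟩
      refine ⟨i + m * (n+1), ?_⟩
      show (v ((i + m * (n+1)) % (n+1))).1 ((i + m * (n+1)) / (n+1)) = (v i).1 m
      rw [Nat.add_mul_mod_self_right, Nat.mod_eq_of_lt hi,
        Nat.add_mul_div_right _ _ (Nat.succ_pos n), Nat.div_eq_of_lt hi, Nat.zero_add]
  obtain ⟨a0⟩ := hne
  set S : Set P.carrier :=
    {x | ∃ a : A.carrier, ∃ s0 : I, ∀ s : I, cov s0 s →
      valOf A (Set.range s.1) (x s) = a} with hSdef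
  have hS : IsSubuniv P S := by
    intro f x hx
    choose a s0 hs0 using hx
    obtain ⟨n, hn⟩ := hA (Term.app f Term.e)
    obtain ⟨w, hw⟩ := dir n s0
    refine ⟨A.op f a, w, fun s hs => ?_⟩
    show A.op f (fun i => valOf A (Set.range s.1) (x i s)) = A.op f a
    exact hn _ _ (fun i hi => hs0 i s (Set.Subset.trans (hw i (Nat.lt_succ_of_lt hi)) hs))
  have hKS : K (subAlg P S hS) :=
    hK.2.1 P _ hKP ⟨Subtype.val, Subtype.val_injective, fun f t => rfl⟩
  set al : (subAlg P S hS).carrier → A.carrier := fun x => x.2.choose with hal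
  have alspec : ∀ x : (subAlg P S hS).carrier,
      ∃ s0 : I, ∀ s : I, cov s0 s → valOf A (Set.range s.1) (x.1 s) = al x :=
    fun x => x.2.choose_spec
  have uniq : ∀ (x : P.carrier) (a : A.carrier) (s0 : I) (b : A.carrier) (t0 : I),
      (∀ s : I, cov s0 s → valOf A (Set.range s.1) (x s) = a) →
      (∀ s : I, cov t0 s → valOf A (Set.range s.1) (x s) = b) → a = b := by
    intro x a s0 b t0 ha hb
    obtain ⟨w, hw⟩ := dir 1 (fun i => if i = 0 then s0 else t0)
    have h0 : cov s0 w := by simpa using hw 0 (by norm_num)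
    have h1 : cov t0 w := by simpa using hw 1 (by norm_num)
    rw [← ha w h0, hb w h1]
  refine hK.1 (subAlg P S hS) A hKS ⟨al, ?_, ?_⟩
  · intro a
    set x : P.carrier := fun s =>
      if hm : a ∈ gen A (Set.range s.1) then ⟨a, hm⟩
      else ⟨s.1 0, subset_gen A _ ⟨0, rfl⟩⟩ with hx
    set ca : I := ⟨fun _ => a, (Set.finite_singleton a).subset
      (by rintro _ ⟨k, rfl⟩; exact rfl)⟩ with hca
    have hev : ∀ s : I, cov ca s → valOf A (Set.range s.1) (x s) = a := by
      intro s hs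
      have hm : a ∈ gen A (Set.range s.1) := hs (subset_gen A _ ⟨0, rfl⟩)
      show valOf A (Set.range s.1) (if hm : a ∈ gen A (Set.range s.1) then ⟨a, hm⟩
        else ⟨s.1 0, subset_gen A _ ⟨0, rfl⟩⟩) = a
      have key : ∀ y : (genSubalg A (Set.range s.1)).carrier,
          y = ⟨a, hm⟩ → valOf A (Set.range s.1) y = a := fun y hy => hy ▸ rfl
      exact key _ (dif_pos hm)
    have hxS : x ∈ S := ⟨a, ca, hev⟩
    refine ⟨⟨x, hxS⟩, ?_⟩
    obtain ⟨w0, hw0⟩ := alspec ⟨x, hxS⟩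
    exact uniq x _ w0 a ca hw0 hev
  · intro f t
    obtain ⟨w0, hw0⟩ := alspec ((subAlg P S hS).op f t)
    choose s0 hs0 using fun i => alspec (t i)
    obtain ⟨n, hn⟩ := hA (Term.app f Term.e)
    obtain ⟨w, hw⟩ := dir n (fun i => if i < n then s0 i else w0)
    have hww0 : cov w0 w := by
      have := hw n (Nat.lt_succ_self n)
      simpa [lt_irrefl] using this
    rw [← hw0 w hww0]
    show A.op f (fun i => valOf A (Set.range w.1) ((t i).1 w))
        = A.op f (fun i => al (t i))
    refine hn _ _ (fun i hi => ?_)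
    have hc : cov (s0 i) w := by simpa [hi] using hw i (Nat.lt_succ_of_lt hi)
    exact hs0 i w hc
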